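/- Every orbit of the map φ = F ∘ I ∘ F^{-1} ∘ R acting on S_n has size a power of 2; specifically, the orbit of w has size 2^h where h is the height (maximal number of edges on a root-to-leaf path) of the heap H(w). -/

import Mathlib

/-- The cycle of `w` containing `x`, listed starting at `x`:
`[x, w x, w² x, …]` with each element appearing once. -/
def cyc {n : ℕ} (w : Equiv.Perm (Fin n)) (x : Fin n) : List (Fin n) :=
  (List.range n).foldl (fun acc k => if (w ^ k) x ∈ acc then acc else acc ++ [(w ^ k) x]) []

/-- The Rényi–Foata word of `w`: write the canonical cycle decomposition
(each cycle starting with its largest element, cycles listed in increasing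
order of largest elements) and drop the parentheses. -/
def foataWord {n : ℕ} (w : Equiv.Perm (Fin n)) : List (Fin n) :=
  ((List.finRange n).filter (fun x => decide (∀ y ∈ cyc w x, y ≤ x))).flatMap (cyc w)

/-- The Rényi–Foata map, as a function `Fin n → Fin n` reading off the word. -/
def foataFun {n : ℕ} (w : Equiv.Perm (Fin n)) : Fin n → Fin n :=
  fun i => (foataWord w).getD i.val ⟨0, i.pos⟩

/-- One-line notation of a permutation, as a list of values in `Fin n`. -/
def oneLineF {n : ℕ} (w : Equiv.Perm (Fin n)) : List (Fin n) :=
  (List.finRange n).map w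

/-- One-line notation with natural-number entries (0-indexed values). -/
def oneLineN {n : ℕ} (w : Equiv.Perm (Fin n)) : List ℕ :=
  (List.finRange n).map fun i => (w i : ℕ)

/-- The Rényi–Foata word with natural-number entries. -/
def wordN {n : ℕ} (w : Equiv.Perm (Fin n)) : List ℕ :=
  (foataWord w).map Fin.val

/-- `i` is a record (left-to-right maximum) position of the word `L`. -/
def recB (L : List ℕ) (i : ℕ) : Bool :=
  decide (i < L.length ∧ ∀ j < i, L.getD j 0 < L.getD i 0)

/-- Number of records (left-to-right maxima) of the word `L`. -/
def recordCount (L : List ℕ) : ℕ :=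
  ((List.range L.length).filter (recB L)).length

/-- Number of fixed points (1-cycles) of `w`. -/
def fixCount {n : ℕ} (w : Equiv.Perm (Fin n)) : ℕ :=
  (Finset.univ.filter fun i : Fin n => w i = i).card

/-- `IsPhi w w'` says that `w' = φ(w)` where `φ = F ∘ I ∘ F⁻¹ ∘ R`:
first reverse the one-line notation of `w`, then apply `F⁻¹` (giving the
unique `u` whose Foata word is that reversal), invert `u`, and apply `F`. -/
def IsPhi {n : ℕ} (w w' : Equiv.Perm (Fin n)) : Prop :=
  ∃ u : Equiv.Perm (Fin n),
    foataWord u = (oneLineF w).reverse ∧ oneLineF w' = foataWord u⁻¹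

/-- `IsPhiBar w w'` says that `w' = φ̄(w)` where `φ̄ = I ∘ F⁻¹ ∘ R ∘ F`:
apply `F` to `w`, reverse the resulting word, apply `F⁻¹`, and invert. -/
def IsPhiBar {n : ℕ} (w w' : Equiv.Perm (Fin n)) : Prop :=
  foataWord w'⁻¹ = (foataWord w).reverse

/-- `IsGamma w w'` says that `w' = γ(w)` where `γ = I ∘ F⁻¹ ∘ C ∘ F`:
apply `F` to `w`, complement each entry of the resulting word, apply `F⁻¹`,
and invert. -/
def IsGamma {n : ℕ} (w w' : Equiv.Perm (Fin n)) : Prop :=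
  foataWord w'⁻¹ = (foataWord w).map Fin.rev

/-- Binary trees with natural-number labels. -/
inductive BTree where
  | nil : BTree
  | node : BTree → ℕ → BTree → BTree
deriving DecidableEq

/-- The list of labels of a binary tree, in inorder (left, root, right). -/
def BTree.labels : BTree → List ℕ
  | .nil => []
  | .node l m r => l.labels ++ m :: r.labels

/-- A binary tree is decreasing if labels strictly decrease along every path
from the root: every label in either subtree is smaller than the root. -/
def BTree.IsDec : BTree → Prop
  | .nil => True
  | .node l m r =>
      (∀ x ∈ l.labels, x < m) ∧ (∀ x ∈ r.labels, x < m) ∧ l.IsDec ∧ r.IsDec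

/-- Auxiliary fuel-based construction of the heap of a word: the root is the
maximum letter, the subtrees are the heaps of the subwords before and after
the maximum.  (Fuel `= L.length` always suffices.) -/
def heapAux : ℕ → List ℕ → BTree
  | 0, _ => .nil
  | _, [] => .nil
  | fuel + 1, L =>
      let m := L.max?.getD 0
      let i := L.idxOf m
      .node (heapAux fuel (L.take i)) m (heapAux fuel (L.drop (i + 1)))

/-- The heap (decreasing binary tree) of a word `L`. -/
def heapOf (L : List ℕ) : BTree := heapAux L.length L

/-- One-line notation of `w ∈ S_n` as a word with entries in `{1, …, n}`. -/
def oneLine1 {n : ℕ} (w : Equiv.Perm (Fin n)) : List ℕ :=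
  (List.finRange n).map fun i => (w i : ℕ) + 1

/-- The height of a binary tree: the number of edges on a longest path from
the root to a leaf (a single vertex has height `0`). -/
def BTree.eheight : BTree → ℕ
  | .nil => 0
  | .node .nil _ .nil => 0
  | .node l _ r => 1 + max l.eheight r.eheight


-- ==================== auxiliary development ====================








set_option linter.unusedSectionVars false

open List

variable {α : Type*} [LinearOrder α]

def JwAux : ℕ → List α → List α
  | 0, _ => []
  | _ + 1, [] => []
  | f + 1, a :: L => a :: (L.takeWhile (· < a)).reverse ++ JwAux f (L.dropWhile (· < a))

def Jw (L : List α) : List α := JwAux L.length L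

def phiW (L : List α) : List α := Jw L.reverse

lemma dropWhile_len_le (p : α → Bool) (L : List α) : (L.dropWhile p).length ≤ L.length :=
  (List.dropWhile_sublist p).length_le

lemma JwAux_congr : ∀ (f g : ℕ) (L : List α), L.length ≤ f → L.length ≤ g →
    JwAux f L = JwAux g L := by
  intro f
  induction f with
  | zero =>
    intro g L hf _
    have : L = [] := List.length_eq_zero_iff.mp (Nat.le_zero.mp hf)
    subst this
    cases g <;> rfl
  | succ f ih =>
    intro g L hf hg
    match L, g with
    | [], g => cases g <;> rfl
    | a :: L, 0 => simp at hg
    | a :: L, g + 1 =>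
      simp only [JwAux]
      have hf' : L.length ≤ f := by simpa using hf
      have hg' : L.length ≤ g := by simpa using hg
      have h1 : (L.dropWhile (· < a)).length ≤ f := le_trans (dropWhile_len_le _ _) hf'
      have h2 : (L.dropWhile (· < a)).length ≤ g := le_trans (dropWhile_len_le _ _) hg'
      rw [ih _ _ h1 h2]

lemma JwAux_eq_Jw (f : ℕ) (L : List α) (h : L.length ≤ f) : JwAux f L = Jw L :=
  JwAux_congr f L.length L h le_rfl

@[simp] lemma Jw_nil : Jw ([] : List α) = [] := rfl

lemma head?_dropWhile (p : α → Bool) : ∀ (L : List α), ∀ b ∈ (L.dropWhile p).head?, ¬ p b := by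
  intro L
  induction L with
  | nil => simp
  | cons a L ih =>
    by_cases h : p a
    · simpa [List.dropWhile_cons, h] using ih
    · simp [List.dropWhile_cons, h]

lemma takeWhile_app (p : α → Bool) (T R : List α) (hT : ∀ t ∈ T, p t)
    (hR : ∀ b ∈ R.head?, ¬ p b) : (T ++ R).takeWhile p = T := by
  induction T with
  | nil =>
    cases R with
    | nil => rfl
    | cons b R => simpa [List.takeWhile_cons] using hR b rfl
  | cons a T ih =>
    have ha := hT a (by simp)
    simp only [List.cons_append, List.takeWhile_cons, ha, if_pos]
    rw [ih (fun t ht => hT t (by simp [ht]))]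

lemma dropWhile_app (p : α → Bool) (T R : List α) (hT : ∀ t ∈ T, p t)
    (hR : ∀ b ∈ R.head?, ¬ p b) : (T ++ R).dropWhile p = R := by
  have h := List.takeWhile_append_dropWhile (p := p) (l := T ++ R)
  rw [takeWhile_app p T R hT hR] at h
  exact (List.append_cancel_left h)

lemma Jw_cons_block (a : α) (T R : List α) (hT : ∀ t ∈ T, t < a)
    (hR : ∀ b ∈ R.head?, ¬ b < a) :
    Jw (a :: (T ++ R)) = a :: T.reverse ++ Jw R := by
  have hT' : ∀ t ∈ T, (decide (t < a)) = true := fun t ht => by simpa using hT t ht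
  have hR' : ∀ b ∈ R.head?, ¬ (decide (b < a)) = true := fun b hb => by simpa using hR b hb
  show JwAux ((a :: (T ++ R)).length) (a :: (T ++ R)) = _
  simp only [List.length_cons, JwAux]
  rw [takeWhile_app _ T R hT' hR', dropWhile_app _ T R hT' hR',
    JwAux_eq_Jw _ R (by simp)]

lemma Jw_perm : ∀ (L : List α), (Jw L).Perm L := by
  have key : ∀ (f : ℕ) (L : List α), L.length ≤ f → (JwAux f L).Perm L := by
    intro f
    induction f with
    | zero =>
      intro L hf
      have : L = [] := List.length_eq_zero_iff.mp (Nat.le_zero.mp hf)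
      subst this; rfl
    | succ f ih =>
      intro L hf
      match L with
      | [] => rfl
      | a :: L =>
        simp only [JwAux]
        refine List.Perm.cons a ?_
        calc (L.takeWhile (· < a)).reverse ++ JwAux f (L.dropWhile (· < a))
            ~ (L.takeWhile (· < a)) ++ JwAux f (L.dropWhile (· < a)) :=
              (List.reverse_perm _).append_right _
          _ ~ (L.takeWhile (· < a)) ++ (L.dropWhile (· < a)) := by
              refine List.Perm.append_left _ (ih _ ?_)
              exact le_trans (dropWhile_len_le _ _) (by simpa using hf)
          _ = L := List.takeWhile_append_dropWhile
  exact fun L => key L.length L le_rfl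

lemma phiW_perm (L : List α) : (phiW L).Perm L :=
  (Jw_perm L.reverse).trans (List.reverse_perm L)

lemma phiW_iter_perm (k : ℕ) (L : List α) : (phiW^[k] L).Perm L := by
  induction k with
  | zero => rfl
  | succ k ih => rw [Function.iterate_succ_apply']; exact (phiW_perm _).trans ih

lemma Jw_split (m : α) : ∀ (n : ℕ) (X : List α), X.length ≤ n →
    ∀ (Y : List α), (∀ x ∈ X, x < m) → (∀ y ∈ Y, y < m) →
    Jw (X ++ m :: Y) = Jw X ++ m :: Y.reverse := by
  intro n
  induction n with
  | zero =>
    intro X hX Y _ hYm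
    have : X = [] := List.length_eq_zero_iff.mp (Nat.le_zero.mp hX)
    subst this
    have := Jw_cons_block m Y [] (fun t ht => hYm t ht) (by simp)
    simpa using this
  | succ n ih =>
    intro X hX Y hXm hYm
    match X with
    | [] =>
      have := Jw_cons_block m Y [] (fun t ht => hYm t ht) (by simp)
      simpa using this
    | a :: X' =>
      have ham : a < m := hXm a (by simp)
      set T := X'.takeWhile (· < a) with hTdef
      set R := X'.dropWhile (· < a) with hRdef
      have hTR : T ++ R = X' := List.takeWhile_append_dropWhile
      have hT : ∀ t ∈ T, t < a := fun t ht => by simpa using List.mem_takeWhile_imp ht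
      have hRhead : ∀ b ∈ R.head?, ¬ b < a := fun b hb => by simpa using head?_dropWhile _ X' b hb
      have hRsub : R.Sublist X' := List.dropWhile_sublist _
      have hRm : ∀ x ∈ R, x < m := fun x hx => hXm x (by simp [hRsub.mem hx])
      have hRlen : R.length ≤ n := le_trans hRsub.length_le (by simpa using hX)
      have e1 : a :: X' ++ m :: Y = a :: (T ++ (R ++ m :: Y)) := by
        rw [← hTR]; simp
      have hRY : ∀ b ∈ (R ++ m :: Y).head?, ¬ b < a := by
        cases hRe : R with
        | nil => simpa using not_lt_of_gt ham
        | cons b R' =>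
          intro c hc
          have hcb : b = c := by simpa using hc
          exact hcb ▸ hRhead b (by rw [hRe]; simp)
      have lhs : Jw (a :: X' ++ m :: Y) = a :: T.reverse ++ Jw (R ++ m :: Y) := by
        rw [e1, Jw_cons_block a T (R ++ m :: Y) hT hRY]
      have e2 : a :: X' = a :: (T ++ R) := by rw [hTR]
      have rhs : Jw (a :: X') = a :: T.reverse ++ Jw R := by
        rw [e2, Jw_cons_block a T R hT hRhead]
      rw [lhs, rhs, ih R hRlen Y hRm hYm]
      simp

lemma phiW_node (A B : List α) (m : α) (hA : ∀ x ∈ A, x < m) (hB : ∀ x ∈ B, x < m) :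
    phiW (A ++ m :: B) = phiW B ++ m :: A := by
  unfold phiW
  have e : (A ++ m :: B).reverse = B.reverse ++ m :: A.reverse := by simp
  rw [e, Jw_split m B.reverse.length B.reverse le_rfl A.reverse
    (fun x hx => hB x (by simpa using hx)) (fun x hx => hA x (by simpa using hx))]
  simp

lemma phiW_two (A B : List α) (m : α) (hA : ∀ x ∈ A, x < m) (hB : ∀ x ∈ B, x < m) :
    phiW (phiW (A ++ m :: B)) = phiW A ++ m :: phiW B := by
  rw [phiW_node A B m hA hB,
    phiW_node (phiW B) A m (fun x hx => hB x ((phiW_perm B).mem_iff.mp hx)) hA]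

lemma phiW_iter_two (k : ℕ) (A B : List α) (m : α) (hA : ∀ x ∈ A, x < m)
    (hB : ∀ x ∈ B, x < m) :
    phiW^[2 * k] (A ++ m :: B) = phiW^[k] A ++ m :: phiW^[k] B := by
  induction k with
  | zero => simp
  | succ k ih =>
    have h2 : 2 * (k + 1) = 2 + 2 * k := by ring
    rw [h2, Function.iterate_add_apply, ih]
    have e : phiW^[2] (phiW^[k] A ++ m :: phiW^[k] B)
        = phiW (phiW^[k] A) ++ m :: phiW (phiW^[k] B) := by
      show phiW (phiW _) = _
      exact phiW_two _ _ m (fun x hx => hA x ((phiW_iter_perm k A).mem_iff.mp hx))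
        (fun x hx => hB x ((phiW_iter_perm k B).mem_iff.mp hx))
    rw [e, ← Function.iterate_succ_apply' phiW k A, ← Function.iterate_succ_apply' phiW k B]

-- ============ heap lemmas ============

lemma heapAux_nonempty (f : ℕ) (a : ℕ) (L : List ℕ) :
    heapAux (f + 1) (a :: L) =
      .node (heapAux f ((a :: L).take ((a :: L).idxOf (((a :: L).max?).getD 0)))) 
        (((a :: L).max?).getD 0)
        (heapAux f ((a :: L).drop ((a :: L).idxOf (((a :: L).max?).getD 0) + 1))) := rfl

lemma max?_decomp (A B : List ℕ) (m : ℕ) (hA : ∀ x ∈ A, x < m) (hB : ∀ x ∈ B, x < m) :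
    (A ++ m :: B).max? = some m := by
  rw [List.max?_eq_some_iff]
  constructor
  · simp
  · intro b hb
    rcases List.mem_append.mp hb with h | h
    · exact le_of_lt (hA b h)
    · rcases List.mem_cons.mp h with h | h
      · exact le_of_eq h
      · exact le_of_lt (hB b h)

lemma indexOf_decomp (A B : List ℕ) (m : ℕ) (hA : ∀ x ∈ A, x < m) :
    (A ++ m :: B).idxOf m = A.length := by
  induction A with
  | nil => simp
  | cons a A ih =>
    have : a ≠ m := ne_of_lt (hA a (by simp))
    simp only [List.cons_append, List.idxOf_cons_ne _ this, List.length_cons]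
    rw [ih (fun x hx => hA x (by simp [hx]))]

lemma heapAux_congr : ∀ (f g : ℕ) (L : List ℕ), L.length ≤ f → L.length ≤ g →
    heapAux f L = heapAux g L := by
  intro f
  induction f with
  | zero =>
    intro g L hf _
    have : L = [] := List.length_eq_zero_iff.mp (Nat.le_zero.mp hf)
    subst this
    cases g <;> rfl
  | succ f ih =>
    intro g L hf hg
    match L, g with
    | [], g => cases g <;> rfl
    | a :: L, 0 => simp at hg
    | a :: L, g + 1 =>
      rw [heapAux_nonempty, heapAux_nonempty]
      have hf' : L.length ≤ f := by simpa using hf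
      have hg' : L.length ≤ g := by simpa using hg
      set m := ((a :: L).max?).getD 0 with hm
      have hmem : m ∈ a :: L := by
        cases e : (a :: L).max? with
        | none => simp [List.max?_eq_none_iff] at e
        | some b =>
          have : m = b := by rw [hm, e]; rfl
          rw [this]
          exact List.max?_mem e
      have hilt : (a :: L).idxOf m < (a :: L).length := List.idxOf_lt_length_iff.mpr hmem
      set i := (a :: L).idxOf m with hi
      have hTake : ((a :: L).take i).length ≤ L.length := by
        simp only [List.length_take, List.length_cons] at *
        omega
      have hDrop : ((a :: L).drop (i + 1)).length ≤ L.length := by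
        simp only [List.length_drop, List.length_cons] at *
        omega
      rw [ih _ _ (le_trans hTake hf') (le_trans hTake hg'),
        ih _ _ (le_trans hDrop hf') (le_trans hDrop hg')]

lemma heapOf_eq (f : ℕ) (L : List ℕ) (h : L.length ≤ f) : heapAux f L = heapOf L :=
  heapAux_congr f L.length L h le_rfl

lemma heapOf_node (A B : List ℕ) (m : ℕ) (hA : ∀ x ∈ A, x < m) (hB : ∀ x ∈ B, x < m) :
    heapOf (A ++ m :: B) = .node (heapOf A) m (heapOf B) := by
  have hmax : (A ++ m :: B).max? = some m := max?_decomp A B m hA hB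
  have hidx : (A ++ m :: B).idxOf m = A.length := indexOf_decomp A B m hA
  have ht : (A ++ m :: B).take A.length = A := List.take_left
  have hd : (A ++ m :: B).drop (A.length + 1) = B := by
    have h1 : (A ++ m :: B).drop A.length = m :: B := List.drop_left
    have h2 : (A ++ m :: B).drop (A.length + 1) = ((A ++ m :: B).drop A.length).drop 1 := by
      rw [List.drop_drop]
    rw [h2, h1]
    rfl
  unfold heapOf
  cases hAe : A ++ m :: B with
  | nil => simp at hAe
  | cons a L =>
    have hL : L.length = A.length + B.length := by
      have := congrArg List.length hAe
      simp only [List.length_append, List.length_cons] at this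
      omega
    rw [List.length_cons, heapAux_nonempty, ← hAe, hmax]
    simp only [Option.getD_some, hidx]
    rw [ht, hd, heapAux_congr L.length A.length A (by omega) le_rfl,
      heapAux_congr L.length B.length B (by omega) le_rfl]

@[simp] lemma heapOf_nil : heapOf [] = BTree.nil := rfl

lemma heapOf_ne_nil (L : List ℕ) (h : L ≠ []) : heapOf L ≠ BTree.nil := by
  cases L with
  | nil => simp at h
  | cons a L =>
    unfold heapOf
    rw [List.length_cons, heapAux_nonempty]
    simp

lemma eheight_node (l r : BTree) (m : ℕ) (h : ¬(l = BTree.nil ∧ r = BTree.nil)) :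
    (BTree.node l m r).eheight = 1 + max l.eheight r.eheight := by
  cases l with
  | nil =>
    cases r with
    | nil => exact absurd ⟨rfl, rfl⟩ h
    | node a b c => rfl
  | node a b c => cases r <;> rfl

lemma iter_fix_pow (L : List ℕ) (a b : ℕ) (hab : a ≤ b) (h : phiW^[2 ^ a] L = L) :
    phiW^[2 ^ b] L = L := by
  have : (2 : ℕ) ^ b = 2 ^ a * 2 ^ (b - a) := by
    rw [← pow_add]
    congr 1
    omega
  rw [this, Function.iterate_mul]
  exact Function.iterate_fixed h _

theorem phiW_main : ∀ (N : ℕ) (M : List ℕ), M.length ≤ N → M.Nodup →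
    phiW^[2 ^ (heapOf M).eheight] M = M ∧
    ∀ e', (heapOf M).eheight = e' + 1 → phiW^[2 ^ e'] M ≠ M := by
  intro N
  induction N with
  | zero =>
    intro M hlen _
    have : M = [] := List.length_eq_zero_iff.mp (Nat.le_zero.mp hlen)
    subst this
    refine ⟨by simp [BTree.eheight, heapOf_nil, phiW], ?_⟩
    intro e' he
    simp [heapOf_nil, BTree.eheight] at he
  | succ N ih =>
    intro M hlen hnd
    cases hMax : M.max? with
    | none =>
      have : M = [] := List.max?_eq_none_iff.mp hMax
      subst this
      refine ⟨by simp [BTree.eheight, heapOf_nil, phiW], ?_⟩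
      intro e' he
      simp [heapOf_nil, BTree.eheight] at he
    | some m =>
      have hm := List.max?_eq_some_iff.mp hMax
      obtain ⟨A, B, rfl⟩ := List.append_of_mem hm.1
      have hndAB := hnd
      rw [List.nodup_append] at hndAB
      obtain ⟨hndA, hndmB, hdisj⟩ := hndAB
      have hmB : m ∉ B := by
        intro h
        exact (List.nodup_cons.mp hndmB).1 h
      have hndB : B.Nodup := (List.nodup_cons.mp hndmB).2
      have hA : ∀ x ∈ A, x < m := by
        intro x hx
        refine lt_of_le_of_ne (hm.2 x (by simp [hx])) ?_
        intro h
        exact hdisj x hx m (by simp) h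
      have hB : ∀ x ∈ B, x < m := by
        intro x hx
        refine lt_of_le_of_ne (hm.2 x (by simp [hx])) ?_
        intro h
        exact hmB (h ▸ hx)
      have hheap : heapOf (A ++ m :: B) = .node (heapOf A) m (heapOf B) :=
        heapOf_node A B m hA hB
      have hlenA : A.length ≤ N := by
        have := hlen
        simp only [List.length_append, List.length_cons] at this
        omega
      have hlenB : B.length ≤ N := by
        have := hlen
        simp only [List.length_append, List.length_cons] at this
        omega
      by_cases hboth : A = [] ∧ B = []
      · obtain ⟨rfl, rfl⟩ := hboth
        have he0 : (heapOf ([] ++ m :: [])).eheight = 0 := by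
          rw [hheap]
          rfl
        rw [he0]
        constructor
        · simp only [pow_zero, Function.iterate_one]
          rfl
        · intro e' he
          exact absurd he (by omega)
      · have hene : ¬(heapOf A = BTree.nil ∧ heapOf B = BTree.nil) := by
          rintro ⟨h1, h2⟩
          refine hboth ⟨?_, ?_⟩
          · by_contra h
            exact heapOf_ne_nil A h h1
          · by_contra h
            exact heapOf_ne_nil B h h2
        have heH : (heapOf (A ++ m :: B)).eheight
            = 1 + max (heapOf A).eheight (heapOf B).eheight := by
          rw [hheap]
          exact eheight_node _ _ m hene
        set eA := (heapOf A).eheight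
        set eB := (heapOf B).eheight
        have ihA := ih A hlenA hndA
        have ihB := ih B hlenB hndB
        constructor
        · rw [heH]
          have h2 : (2 : ℕ) ^ (1 + max eA eB) = 2 * 2 ^ (max eA eB) := by
            rw [pow_add]
            ring
          rw [h2, phiW_iter_two _ A B m hA hB]
          rw [iter_fix_pow A eA _ (le_max_left _ _) ihA.1,
            iter_fix_pow B eB _ (le_max_right _ _) ihB.1]
        · intro e' he hcon
          rw [heH] at he
          have hemax : max eA eB = e' := by omega
          cases e' with
          | zero =>
            simp only [pow_zero, Function.iterate_one] at hcon
            rw [phiW_node A B m hA hB] at hcon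
            have hlenEq : B.length = A.length := by
              have h1 : (phiW B ++ m :: A).idxOf m = (phiW B).length :=
                indexOf_decomp (phiW B) A m
                  (fun x hx => hB x ((phiW_perm B).mem_iff.mp hx))
              have h2 : (A ++ m :: B).idxOf m = A.length := indexOf_decomp A B m hA
              rw [hcon] at h1
              rw [h1] at h2
              rw [(phiW_perm B).length_eq] at h2
              exact h2
            have := List.append_inj hcon (by rw [(phiW_perm B).length_eq, hlenEq])
            have hABeq : A = B := by
              have h3 : m :: A = m :: B := this.2
              exact (List.cons_inj_right m).mp h3
            have hAnil : A = [] := by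
              by_contra h
              obtain ⟨a, ha⟩ := List.exists_mem_of_ne_nil A h
              exact hdisj a ha a (by simp [hABeq ▸ ha]) rfl
            exact hboth ⟨hAnil, hABeq ▸ hAnil⟩
          | succ k =>
            have h2 : (2 : ℕ) ^ (k + 1) = 2 * 2 ^ k := by
              rw [pow_succ]
              ring
            rw [h2, phiW_iter_two _ A B m hA hB] at hcon
            have hlA : (phiW^[2 ^ k] A).length = A.length := (phiW_iter_perm _ A).length_eq
            have := List.append_inj hcon hlA
            have hfixA : phiW^[2 ^ k] A = A := this.1
            have hfixB : phiW^[2 ^ k] B = B := by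
              have h3 := this.2
              exact List.tail_eq_of_cons_eq h3
            rcases le_total eA eB with hle | hle
            · have : eB = k + 1 := by omega
              exact ihB.2 k this hfixB
            · have : eA = k + 1 := by omega
              exact ihA.2 k this hfixA




section Collect

variable {α : Type*} [DecidableEq α]

lemma foldl_collect_le (f : ℕ → α) (c : ℕ)
    (hinj : ∀ i < c, ∀ j < c, f i = f j → i = j) :
    ∀ k ≤ c, (List.range k).foldl (fun acc j => if f j ∈ acc then acc else acc ++ [f j]) []
      = (List.range k).map f := by
  intro k
  induction k with
  | zero => simp
  | succ k ih =>
    intro hk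
    rw [List.range_succ, List.foldl_append, List.map_append, ih (by omega)]
    simp only [List.foldl_cons, List.foldl_nil, List.map_cons, List.map_nil]
    rw [if_neg]
    intro hmem
    obtain ⟨j, hj, hje⟩ := List.mem_map.mp hmem
    have hjk : j < k := List.mem_range.mp hj
    have hjc : j < c := by omega
    have := hinj k (by omega) j hjc hje.symm
    omega

lemma foldl_collect (f : ℕ → α) (c : ℕ) (hc : 0 < c)
    (hinj : ∀ i < c, ∀ j < c, f i = f j → i = j)
    (hmod : ∀ k, f k = f (k % c)) :
    ∀ n, c ≤ n → (List.range n).foldl (fun acc j => if f j ∈ acc then acc else acc ++ [f j]) []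
      = (List.range c).map f := by
  intro n
  induction n with
  | zero => omega
  | succ n ih =>
    intro hn
    rcases Nat.lt_or_ge c (n + 1) with h | h
    · have hcn : c ≤ n := by omega
      rw [List.range_succ, List.foldl_append, ih hcn]
      simp only [List.foldl_cons, List.foldl_nil]
      rw [if_pos]
      rw [hmod n]
      exact List.mem_map.mpr ⟨n % c, List.mem_range.mpr (Nat.mod_lt _ hc), rfl⟩
    · have : c = n + 1 := by omega
      subst this
      exact foldl_collect_le f (n + 1) hinj (n + 1) le_rfl

end Collect

section Cyc

variable {n : ℕ} (u : Equiv.Perm (Fin n)) (x : Fin n)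

lemma perm_periodic : Function.IsPeriodicPt (⇑u) (orderOf u) x := by
  show (⇑u)^[orderOf u] x = x
  rw [Equiv.Perm.iterate_eq_pow, pow_orderOf_eq_one]
  rfl

lemma perm_minPeriod_pos : 0 < Function.minimalPeriod (⇑u) x := by
  rcases n with - | n
  · exact absurd x.2 (by omega)
  · exact (perm_periodic u x).minimalPeriod_pos (orderOf_pos u)

lemma perm_minPeriod_apply : (u ^ Function.minimalPeriod (⇑u) x) x = x := by
  have := Function.isPeriodicPt_minimalPeriod (⇑u) x
  rwa [Function.IsPeriodicPt, Function.IsFixedPt, Equiv.Perm.iterate_eq_pow] at this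

lemma perm_minPeriod_le : Function.minimalPeriod (⇑u) x ≤ n := by
  set c := Function.minimalPeriod (⇑u) x with hc
  by_contra h
  push_neg at h
  have hinj : Function.Injective (fun k : Fin c => (u ^ (k : ℕ)) x) := by
    intro i j hij
    have := Function.iterate_injOn_Iio_minimalPeriod (f := ⇑u) (x := x)
      (by exact Set.mem_Iio.mpr i.2) (by exact Set.mem_Iio.mpr j.2) ?_
    · exact Fin.ext this
    · simpa [Equiv.Perm.iterate_eq_pow] using hij
  have := Fintype.card_le_of_injective _ hinj
  simp at this
  omega

lemma cyc_eq : cyc u x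
    = (List.range (Function.minimalPeriod (⇑u) x)).map (fun k => (u ^ k) x) := by
  set c := Function.minimalPeriod (⇑u) x with hc
  have hc0 : 0 < c := perm_minPeriod_pos u x
  have hinj : ∀ i < c, ∀ j < c, (u ^ i) x = (u ^ j) x → i = j := by
    intro i hi j hj hij
    exact Function.iterate_injOn_Iio_minimalPeriod (f := ⇑u) (x := x)
      (Set.mem_Iio.mpr hi) (Set.mem_Iio.mpr hj)
      (by simpa [Equiv.Perm.iterate_eq_pow] using hij)
  have hfix : ∀ d, ((u ^ c) ^ d) x = x := by
    intro d
    induction d with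
    | zero => rfl
    | succ d ihd =>
      rw [pow_succ, Equiv.Perm.mul_apply, perm_minPeriod_apply, ihd]
  have hmod : ∀ k, (u ^ k) x = (u ^ (k % c)) x := by
    intro k
    conv_lhs => rw [show k = k % c + c * (k / c) from (Nat.mod_add_div k c).symm]
    rw [pow_add, Equiv.Perm.mul_apply, pow_mul, hfix]
  exact foldl_collect _ c hc0 hinj hmod n (perm_minPeriod_le u x)

end Cyc

section Cyc2

variable {n : ℕ} (u : Equiv.Perm (Fin n)) (x : Fin n)

lemma perm_minPeriod_inv :
    Function.minimalPeriod (⇑u⁻¹) x = Function.minimalPeriod (⇑u) x := by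
  have key : ∀ (v : Equiv.Perm (Fin n)) (k : ℕ),
      Function.IsPeriodicPt (⇑v⁻¹) k x → Function.IsPeriodicPt (⇑v) k x := by
    intro v k h
    rw [Function.IsPeriodicPt, Function.IsFixedPt, Equiv.Perm.iterate_eq_pow] at h ⊢
    rw [inv_pow] at h
    have := congrArg (⇑(v ^ k)) h
    rw [← Equiv.Perm.mul_apply, mul_inv_cancel, Equiv.Perm.one_apply] at this
    exact this.symm
  apply _root_.le_antisymm
  · exact Function.IsPeriodicPt.minimalPeriod_le (perm_minPeriod_pos u x)
      (by
        have h := Function.isPeriodicPt_minimalPeriod (⇑u) x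
        have := key u⁻¹ _ (by rwa [inv_inv])
        exact this)
  · exact Function.IsPeriodicPt.minimalPeriod_le (perm_minPeriod_pos u⁻¹ x)
      (key u _ (Function.isPeriodicPt_minimalPeriod (⇑u⁻¹) x))

lemma cyc_length : (cyc u x).length = Function.minimalPeriod (⇑u) x := by
  rw [cyc_eq]; simp

lemma cyc_head : ∃ t, cyc u x = x :: t := by
  rw [cyc_eq]
  set c := Function.minimalPeriod (⇑u) x
  have hc0 : 0 < c := perm_minPeriod_pos u x
  obtain ⟨c', hce⟩ : ∃ c', c = c' + 1 := ⟨c - 1, by omega⟩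
  rw [hce, List.range_succ_eq_map]
  refine ⟨List.map ((fun k => (u ^ k) x) ∘ Nat.succ) (List.range c'), ?_⟩
  simp

lemma cyc_nodup : (cyc u x).Nodup := by
  rw [cyc_eq]
  refine List.Nodup.map_on ?_ List.nodup_range
  intro i hi j hj hij
  exact Function.iterate_injOn_Iio_minimalPeriod (f := ⇑u) (x := x)
    (Set.mem_Iio.mpr (List.mem_range.mp hi)) (Set.mem_Iio.mpr (List.mem_range.mp hj))
    (by simpa [Equiv.Perm.iterate_eq_pow] using hij)

lemma cyc_inv : cyc u⁻¹ x = x :: (cyc u x).tail.reverse := by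
  have hlen : (cyc u⁻¹ x).length = (cyc u x).length := by
    rw [cyc_length, cyc_length, perm_minPeriod_inv]
  set c := Function.minimalPeriod (⇑u) x with hcdef
  have hc0 : 0 < c := perm_minPeriod_pos u x
  have hlc : (cyc u x).length = c := cyc_length u x
  have hlc' : (cyc u⁻¹ x).length = c := by rw [hlen, hlc]
  have hfixc : (u ^ c) x = x := perm_minPeriod_apply u x
  apply List.ext_getElem
  · rw [hlc']
    simp only [List.length_cons, List.length_reverse, List.length_tail, hlc]
    omega
  intro i h1 h2
  have hic : i < c := by rwa [hlc'] at h1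
  have hgetL : (cyc u⁻¹ x)[i] = ((u⁻¹) ^ i) x := by
    simp only [cyc_eq, List.getElem_map, List.getElem_range]
  rw [hgetL]
  rcases Nat.eq_zero_or_pos i with rfl | hi0
  · simp
  · obtain ⟨j, rfl⟩ : ∃ j, i = j + 1 := ⟨i - 1, by omega⟩
    have hjlt : j < (cyc u x).tail.reverse.length := by
      simp only [List.length_reverse, List.length_tail, hlc]
      omega
    rw [List.getElem_cons_succ, List.getElem_reverse]
    have htail : ∀ (t : ℕ) (ht : t < (cyc u x).tail.length),
        (cyc u x).tail[t] = (u ^ (t + 1)) x := by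
      intro t ht
      simp only [List.getElem_tail, cyc_eq, List.getElem_map, List.getElem_range]
    rw [htail]
    · have harith : (cyc u x).tail.length - 1 - j + 1 = c - (j + 1) := by
        simp only [List.length_tail, hlc]
        omega
      rw [harith]
      -- (u⁻¹ ^ (j+1)) x = (u ^ (c - (j+1))) x
      have happ : (u ^ (j + 1)) ((u⁻¹ ^ (j + 1)) x) = x := by
        rw [inv_pow, ← Equiv.Perm.mul_apply, mul_inv_cancel, Equiv.Perm.one_apply]
      have happ2 : (u ^ (j + 1)) ((u ^ (c - (j + 1))) x) = x := by
        rw [← Equiv.Perm.mul_apply, ← pow_add]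
        have : j + 1 + (c - (j + 1)) = c := by omega
        rw [this, hfixc]
      exact (u ^ (j + 1)).injective (by rw [happ, happ2])

lemma cyc_mem_iff (y : Fin n) : (y ∈ cyc u⁻¹ x ↔ y ∈ cyc u x) := by
  rw [cyc_inv]
  obtain ⟨t, ht⟩ := cyc_head u x
  rw [ht]
  simp

end Cyc2

section FlatMap

variable {β : Type*} [LinearOrder β]

lemma Jw_flatMap (g : β → List β) :
    ∀ S : List β, S.Pairwise (· < ·) →
    (∀ x ∈ S, ∃ t, g x = x :: t ∧ ∀ y ∈ t, y < x) →
    Jw (S.flatMap g) = S.flatMap (fun x => x :: ((g x).tail.reverse)) := by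
  intro S
  induction S with
  | nil => simp
  | cons x S ih =>
    intro hpw hblk
    obtain ⟨t, hgx, ht⟩ := hblk x (by simp)
    have hrest : S.Pairwise (· < ·) := hpw.of_cons
    have hxlt : ∀ y ∈ S, x < y := (List.pairwise_cons.mp hpw).1
    have hhead : ∀ b ∈ (S.flatMap g).head?, ¬ b < x := by
      cases S with
      | nil => simp
      | cons x' S' =>
        obtain ⟨t', hgx', _⟩ := hblk x' (by simp)
        intro b hb
        rw [List.flatMap_cons, hgx'] at hb
        have hbe : x' = b := by simpa using hb
        subst hbe
        exact not_lt_of_gt (hxlt x' (by simp))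
    rw [List.flatMap_cons, hgx, List.cons_append,
      Jw_cons_block x t _ ht hhead, ih hrest (fun y hy => hblk y (by simp [hy]))]
    rw [List.flatMap_cons, hgx]
    simp

end FlatMap

section FoataInv

variable {n : ℕ}

lemma foataWord_inv (u : Equiv.Perm (Fin n)) :
    foataWord u⁻¹ = Jw (foataWord u) := by
  unfold foataWord
  have hfil : (List.finRange n).filter (fun x => decide (∀ y ∈ cyc u⁻¹ x, y ≤ x))
      = (List.finRange n).filter (fun x => decide (∀ y ∈ cyc u x, y ≤ x)) := by
    apply List.filter_congr
    intro x _
    simp only [decide_eq_decide]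
    constructor
    · intro h y hy
      exact h y ((cyc_mem_iff u x y).mpr hy)
    · intro h y hy
      exact h y ((cyc_mem_iff u x y).mp hy)
  rw [hfil]
  set S := (List.finRange n).filter (fun x => decide (∀ y ∈ cyc u x, y ≤ x)) with hS
  have hpw : S.Pairwise (· < ·) :=
    List.Pairwise.sublist List.filter_sublist (List.pairwise_lt_finRange n)
  have hblk : ∀ x ∈ S, ∃ t, cyc u x = x :: t ∧ ∀ y ∈ t, y < x := by
    intro x hx
    obtain ⟨t, ht⟩ := cyc_head u x
    refine ⟨t, ht, ?_⟩
    have hx' : x ∈ (List.finRange n).filter (fun x => decide (∀ y ∈ cyc u x, y ≤ x)) := hS ▸ hx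
    have hP : ∀ y ∈ cyc u x, y ≤ x := of_decide_eq_true ((List.mem_filter.mp hx').2)
    have hnd := cyc_nodup u x
    rw [ht] at hnd hP
    intro y hy
    refine lt_of_le_of_ne (hP y (by simp [hy])) ?_
    intro hxy
    exact (List.nodup_cons.mp hnd).1 (hxy ▸ hy)
  rw [Jw_flatMap (cyc u) S hpw hblk]
  apply List.flatMap_congr
  intro x hx
  rw [cyc_inv]

end FoataInv

-- ============ map commutation and final assembly ============




section MapComm

variable {β γ : Type*} [LinearOrder β] [LinearOrder γ] (f : β → γ)
  (hf : ∀ a b : β, a < b ↔ f a < f b)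

include hf in
lemma JwAux_map : ∀ (g : ℕ) (L : List β), (JwAux g L).map f = JwAux g (L.map f) := by
  intro g
  induction g with
  | zero => intro L; simp [JwAux]
  | succ g ih =>
    intro L
    cases L with
    | nil => simp [JwAux]
    | cons a L =>
      simp only [List.map_cons, JwAux, List.map_append, List.map_reverse]
      have hpred : ((fun x => decide (x < f a)) ∘ f) = (fun x : β => decide (x < a)) := by
        funext x
        simp [decide_eq_decide]
        exact (hf x a).symm
      rw [List.takeWhile_map, List.dropWhile_map, hpred, ih]

include hf in
lemma Jw_map (L : List β) : (Jw L).map f = Jw (L.map f) := by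
  unfold Jw
  rw [JwAux_map f hf, List.length_map]

include hf in
lemma phiW_map (L : List β) : (phiW L).map f = phiW (L.map f) := by
  unfold phiW
  rw [Jw_map f hf, List.map_reverse]

include hf in
lemma phiW_iter_map (k : ℕ) (L : List β) :
    (phiW^[k] L).map f = phiW^[k] (L.map f) := by
  induction k with
  | zero => rfl
  | succ k ih =>
    rw [Function.iterate_succ_apply', Function.iterate_succ_apply', phiW_map f hf, ih]

end MapComm

section Final

variable {n : ℕ}

lemma oneLine1_eq_map (w : Equiv.Perm (Fin n)) :
    oneLine1 w = (oneLineF w).map (fun i : Fin n => (i : ℕ) + 1) := by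
  unfold oneLine1 oneLineF
  rw [List.map_map]
  rfl

lemma oneLineF_nodup (w : Equiv.Perm (Fin n)) : (oneLineF w).Nodup :=
  (List.nodup_finRange n).map w.injective

lemma oneLine1_nodup (w : Equiv.Perm (Fin n)) : (oneLine1 w).Nodup := by
  rw [oneLine1_eq_map]
  exact (oneLineF_nodup w).map (fun a b h => by
    have : (a : ℕ) = b := by omega
    exact Fin.ext this)

lemma oneLine1_inj (w w' : Equiv.Perm (Fin n)) (h : oneLine1 w = oneLine1 w') : w = w' := by
  apply Equiv.ext
  intro i
  unfold oneLine1 at h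
  have := List.map_inj_left.mp h i (List.mem_finRange i)
  have h2 : ((w i : ℕ)) = (w' i : ℕ) := by omega
  exact Fin.ext h2

lemma phi_step (φ : Equiv.Perm (Fin n) → Equiv.Perm (Fin n))
    (hφ : ∀ w, IsPhi w (φ w)) (w : Equiv.Perm (Fin n)) :
    oneLine1 (φ w) = phiW (oneLine1 w) := by
  obtain ⟨u, h1, h2⟩ := hφ w
  have hF : oneLineF (φ w) = phiW (oneLineF w) := by
    rw [h2, foataWord_inv, h1]
    rfl
  rw [oneLine1_eq_map, oneLine1_eq_map, hF]
  exact (phiW_map (fun i : Fin n => (i : ℕ) + 1)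
    (fun a b => by
      show a < b ↔ (a : ℕ) + 1 < (b : ℕ) + 1
      rw [Fin.lt_def]
      omega) (oneLineF w))

lemma phi_iter (φ : Equiv.Perm (Fin n) → Equiv.Perm (Fin n))
    (hφ : ∀ w, IsPhi w (φ w)) (k : ℕ) (w : Equiv.Perm (Fin n)) :
    oneLine1 (φ^[k] w) = phiW^[k] (oneLine1 w) := by
  induction k with
  | zero => rfl
  | succ k ih =>
    rw [Function.iterate_succ_apply', Function.iterate_succ_apply',
      phi_step φ hφ, ih]

theorem phi_orbit_size' (φ : Equiv.Perm (Fin n) → Equiv.Perm (Fin n))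
    (hφ : ∀ w, IsPhi w (φ w)) (w : Equiv.Perm (Fin n)) :
    Function.minimalPeriod φ w = 2 ^ (heapOf (oneLine1 w)).eheight := by
  set M := oneLine1 w with hM
  set e := (heapOf M).eheight with he
  obtain ⟨hper, hnot⟩ := phiW_main M.length M le_rfl (oneLine1_nodup w)
  have hPer : Function.IsPeriodicPt φ (2 ^ e) w := by
    show φ^[2 ^ e] w = w
    apply oneLine1_inj
    rw [phi_iter φ hφ]
    exact hper
  have hdvd := hPer.minimalPeriod_dvd
  obtain ⟨j, hj, hje⟩ := (Nat.dvd_prime_pow Nat.prime_two).mp hdvd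
  rcases eq_or_lt_of_le hj with h | hlt
  · rw [hje, h]
  · exfalso
    have hper2 : Function.IsPeriodicPt φ (2 ^ j * 2 ^ (e - 1 - j)) w :=
      (hje ▸ Function.isPeriodicPt_minimalPeriod φ w).mul_const _
    have harith : 2 ^ j * 2 ^ (e - 1 - j) = 2 ^ (e - 1) := by
      rw [← pow_add]
      congr 1
      omega
    rw [harith] at hper2
    have hM2 : phiW^[2 ^ (e - 1)] M = M := by
      rw [← phi_iter φ hφ]
      exact congrArg oneLine1 hper2
    exact hnot (e - 1) (by omega) hM2

end Final


/-- Every orbit of `φ = F ∘ I ∘ F⁻¹ ∘ R` on `S_n` has size a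
power of `2`: the orbit of `w` has size `2^h` where `h` is the height of the
heap `H(w)` of the one-line notation of `w`. -/
theorem phi_orbit_size (n : ℕ) (φ : Equiv.Perm (Fin n) → Equiv.Perm (Fin n))
    (hφ : ∀ w, IsPhi w (φ w)) (w : Equiv.Perm (Fin n)) :
    Function.minimalPeriod φ w = 2 ^ (heapOf (oneLine1 w)).eheight := by
  exact phi_orbit_size' φ hφ w
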